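/- The Leibniz rule for δ fails in general: for Λ = {{1,2},{1,3}} and Γ = {{2,4},{2,5}}, the product b_Λ b_Γ = 0 (since (⋃Λ)∩(⋃Γ) = {2} is not contained in (∩Λ)∩(∩Γ)), so δ(b_Λ b_Γ) = 0, but δ(b_Λ)b_Γ + (−1)^{|∩Λ|} b_Λ δ(b_Γ) = b_{{{1,2,4},{1,3,5}}} ≠ 0. -/

import Mathlib

/-- Generators of 𝔄_*: ordered collections Λ = (λ_1, ..., λ_r) of finite subsets of ℤ_{>0}. -/
abbrev Gen := List (Finset ℕ)

/-- The vector space 𝔄_* spanned over ℚ by the generators `b_Λ`. -/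
abbrev 𝔄 := Gen →₀ ℚ

/-- Inversion count `ε(A,B) = Σ_{a∈A} |{b ∈ B : b < a}|`. -/
def eps (A B : Finset ℕ) : ℕ := ∑ a ∈ A, (B.filter (· < a)).card

/-- The (1-based) rank of `a` in the increasingly ordered finite set `T`. -/
def rankIn (T : Finset ℕ) (a : ℕ) : ℕ := (T.filter (· ≤ a)).card

/-- `⋃Λ`. -/
def unionAll (Λ : Gen) : Finset ℕ := Λ.foldr (· ∪ ·) ∅

/-- `⋂Λ` (with `⋂` of the empty collection taken to be `∅`). -/
def interAll : Gen → Finset ℕ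
  | [] => ∅
  | a :: t => t.foldr (· ∩ ·) a

/-- Λ and Γ are compatible if one is empty, or they have the same number of elements and
`(⋃Λ) ∩ (⋃Γ) = ∅`. -/
def Compatible (Λ Γ : Gen) : Prop :=
  Λ = [] ∨ Γ = [] ∨ (Λ.length = Γ.length ∧ Disjoint (unionAll Λ) (unionAll Γ))

/-- `Λ ⊎ Γ = (λ_1 ∪ γ_1, ..., λ_r ∪ γ_r)`. -/
def uplus : Gen → Gen → Gen
  | [], Γ => Γ
  | Λ, [] => Λ
  | Λ, Γ => List.zipWith (· ∪ ·) Λ Γ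

-- The product on generators: `b_Λ b_Γ = (−1)^{ε(∩Λ,∩Γ)} b_{Λ⊎Γ}` if Λ and Γ are
-- compatible, and `0` otherwise.
open Classical in
noncomputable def mulGen (Λ Γ : Gen) : 𝔄 :=
  if Compatible Λ Γ then
    ((-1 : ℚ) ^ eps (interAll Λ) (interAll Γ)) • Finsupp.single (uplus Λ Γ) 1
  else 0

/-- The bilinear extension of the product to 𝔄_*. -/
noncomputable def mulA : 𝔄 →ₗ[ℚ] 𝔄 →ₗ[ℚ] 𝔄 :=
  Finsupp.lift (𝔄 →ₗ[ℚ] 𝔄) ℚ Gen fun Λ => Finsupp.lift 𝔄 ℚ Gen fun Γ => mulGen Λ Γ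

/-- The simplicial differential `δ(b_Λ) = Σ_i (−1)^i b_{(∩Λ ∖ α_i, Λ̂)}`: removing
`α ∈ ⋂Λ` from the intersection replaces each `λ_j` by `λ_j ∖ {α}`. -/
noncomputable def deltaA : 𝔄 →ₗ[ℚ] 𝔄 :=
  Finsupp.lift 𝔄 ℚ Gen fun Λ =>
    ∑ α ∈ interAll Λ,
      ((-1 : ℚ) ^ rankIn (interAll Λ) α) • Finsupp.single (Λ.map (·.erase α)) 1

lemma mulA_single (Λ Γ : Gen) :
    mulA (Finsupp.single Λ 1) (Finsupp.single Γ 1) = mulGen Λ Γ := by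
  simp [mulA, Finsupp.lift_apply, Finsupp.sum_single_index]

lemma deltaA_single (Λ : Gen) :
    deltaA (Finsupp.single Λ 1) =
      ∑ α ∈ interAll Λ,
        ((-1 : ℚ) ^ rankIn (interAll Λ) α) • Finsupp.single (Λ.map (·.erase α)) 1 := by
  simp [deltaA, Finsupp.lift_apply, Finsupp.sum_single_index]

lemma deltaL : deltaA (Finsupp.single ([{1,2},{1,3}] : Gen) 1)
    = - Finsupp.single ([{2},{3}] : Gen) 1 := by
  rw [deltaA_single]
  have h : interAll [{1,2},{1,3}] = ({1} : Finset ℕ) := by decide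
  rw [h]
  have h2 : rankIn ({1} : Finset ℕ) 1 = 1 := by decide
  simp [h2]

lemma deltaG : deltaA (Finsupp.single ([{2,4},{2,5}] : Gen) 1)
    = - Finsupp.single ([{4},{5}] : Gen) 1 := by
  rw [deltaA_single]
  have h : interAll [{2,4},{2,5}] = ({2} : Finset ℕ) := by decide
  rw [h]
  have h2 : rankIn ({2} : Finset ℕ) 2 = 1 := by decide
  simp [h2]

lemma mul1 : mulGen ([{1,2},{1,3}] : Gen) ([{2,4},{2,5}] : Gen) = 0 := by
  rw [mulGen, if_neg]
  intro hc
  rcases hc with h | h | ⟨_, h⟩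
  · exact absurd h (by decide)
  · exact absurd h (by decide)
  · revert h; decide

lemma mul2 : mulGen ([{2},{3}] : Gen) ([{2,4},{2,5}] : Gen) = 0 := by
  rw [mulGen, if_neg]
  intro hc
  rcases hc with h | h | ⟨_, h⟩
  · exact absurd h (by decide)
  · exact absurd h (by decide)
  · revert h; decide

lemma mul3 : mulGen ([{1,2},{1,3}] : Gen) ([{4},{5}] : Gen)
    = Finsupp.single ([{1,2,4},{1,3,5}] : Gen) 1 := by
  rw [mulGen, if_pos]
  · have h1 : eps (interAll [{1,2},{1,3}]) (interAll [({4} : Finset ℕ),{5}]) = 0 := by decide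
    have h2 : uplus ([{1,2},{1,3}] : Gen) ([{4},{5}] : Gen) = [{1,2,4},{1,3,5}] := by
      show List.zipWith (· ∪ ·) _ _ = _
      simp [List.zipWith]
    rw [h1, h2]; simp
  · exact Or.inr (Or.inr ⟨rfl, by decide⟩)

/-- The Leibniz rule fails for `Λ = {{1,2},{1,3}}` and `Γ = {{2,4},{2,5}}`. -/
theorem stmt16 :
    mulA (Finsupp.single ([{1,2},{1,3}] : Gen) 1)
        (Finsupp.single ([{2,4},{2,5}] : Gen) 1) = 0 ∧
    mulA (deltaA (Finsupp.single ([{1,2},{1,3}] : Gen) 1))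
        (Finsupp.single ([{2,4},{2,5}] : Gen) 1)
      + ((-1 : ℚ) ^ (interAll [{1,2},{1,3}]).card) •
          mulA (Finsupp.single ([{1,2},{1,3}] : Gen) 1)
            (deltaA (Finsupp.single ([{2,4},{2,5}] : Gen) 1))
      = Finsupp.single ([{1,2,4},{1,3,5}] : Gen) 1 ∧
    (Finsupp.single ([{1,2,4},{1,3,5}] : Gen) (1 : ℚ)) ≠ 0 := by
  
  refine ⟨?_, ?_, ?_⟩
  · rw [mulA_single, mul1]
  · rw [deltaL, deltaG]
    have hc : (interAll [{1,2},{1,3}]).card = 1 := by decide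
    rw [hc]
    simp only [map_neg, LinearMap.neg_apply, mulA_single, mul1, mul2, mul3]
    simp
  · simp
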